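/- Let E = {x ∈ ℕ^ℕ : liminf_n x(n) is finite and even} and O = {x ∈ ℕ^ℕ : liminf_n x(n) is finite and odd}. Then E and O are disjoint sets in Σ⁰₃(ℕ^ℕ) and there is no set C in Δ⁰₃(ℕ^ℕ) with E ⊆ C and C ∩ O = ∅. -/
import Mathlib

/-- The Borel hierarchy: `SigmaZero α A` means `A` is in the Borel class Σ⁰_α.
Σ⁰₁ is the collection of open sets; for α > 1, Σ⁰_α consists of countable unions
⋃ k, A k where each A k is the complement of a Σ⁰_{β k} set for some 1 ≤ β k < α. -/
inductive SigmaZero {X : Type*} [TopologicalSpace X] : Ordinal.{0} → Set X → Prop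
  | isOpen {A : Set X} (h : IsOpen A) : SigmaZero 1 A
  | iUnion {α : Ordinal.{0}} (hα : 1 < α) (A : ℕ → Set X) (β : ℕ → Ordinal.{0})
      (hβ1 : ∀ k, 1 ≤ β k) (hβ : ∀ k, β k < α)
      (h : ∀ k, SigmaZero (β k) (A k)ᶜ) : SigmaZero α (⋃ k, A k)

/-- `A` is Π⁰_α iff its complement is Σ⁰_α. -/
def PiZero {X : Type*} [TopologicalSpace X] (α : Ordinal.{0}) (A : Set X) : Prop :=
  SigmaZero α Aᶜ

/-- `A` is Δ⁰_α iff it is both Σ⁰_α and Π⁰_α. -/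
def DeltaZero {X : Type*} [TopologicalSpace X] (α : Ordinal.{0}) (A : Set X) : Prop :=
  SigmaZero α A ∧ PiZero α A

/-- `liminf_n x n` is finite and equals `k`: `k` is the least natural number such that
`x n ≤ k` for infinitely many `n` (such a `k` exists iff `x` does not tend to infinity). -/
def LiminfEq (x : ℕ → ℕ) (k : ℕ) : Prop :=
  {n | x n ≤ k}.Infinite ∧ ∀ j < k, {n | x n ≤ j}.Finite

/-- Sequences whose liminf is finite and even. -/
def Eset : Set (ℕ → ℕ) := {x | ∃ k, Even k ∧ LiminfEq x k}

/-- Sequences whose liminf is finite and odd. -/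
def Oset : Set (ℕ → ℕ) := {x | ∃ k, Odd k ∧ LiminfEq x k}

open Set

def NF3 (A : Set (ℕ → ℕ)) : Prop :=
  ∃ V : ℕ → ℕ → Set (ℕ → ℕ), (∀ n m, IsOpen (V n m)) ∧ A = ⋃ n, ⋂ m, V n m


def cyl (x : ℕ → ℕ) (n : ℕ) : Set (ℕ → ℕ) := {y | ∀ i < n, y i = x i}

lemma isOpen_cyl (x : ℕ → ℕ) (n : ℕ) : IsOpen (cyl x n) := by
  have : cyl x n = ⋂ i ∈ Finset.range n, ((fun y : ℕ → ℕ => y i) ⁻¹' {x i}) := by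
    ext y; simp [cyl]
  rw [this]
  exact isOpen_biInter_finset fun i _ =>
    (continuous_apply i).isOpen_preimage _ (isOpen_discrete _)

lemma mem_cyl_self (x : ℕ → ℕ) (n : ℕ) : x ∈ cyl x n := fun _ _ => rfl

lemma cyl_anti (x : ℕ → ℕ) {n n' : ℕ} (h : n ≤ n') : cyl x n' ⊆ cyl x n :=
  fun _ hy i hi => hy i (lt_of_lt_of_le hi h)

lemma cyl_eq_of_agree {x x' : ℕ → ℕ} {n : ℕ} (h : ∀ i < n, x i = x' i) : cyl x n = cyl x' n := by
  ext y; constructor <;> intro hy i hi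
  · rw [hy i hi]; exact h i hi
  · rw [hy i hi, h i hi]

lemma exists_cyl_subset {G : Set (ℕ → ℕ)} (hG : IsOpen G) {x : ℕ → ℕ} (hx : x ∈ G) :
    ∃ n, cyl x n ⊆ G := by
  rcases isOpen_pi_iff.mp hG x hx with ⟨I, u, hu, hsub⟩
  refine ⟨(I.sup id) + 1, fun y hy => hsub ?_⟩
  intro i hi
  have : y i = x i := hy i (Nat.lt_succ_of_le (Finset.le_sup (f := id) hi))
  rw [this]; exact (hu i hi).2

lemma infinite_iff_unbdd (S : Set ℕ) : S.Infinite ↔ ∀ N, ∃ n, N ≤ n ∧ n ∈ S := by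
  constructor
  · intro h N
    by_contra hc
    push_neg at hc
    exact h (Set.Finite.subset (finite_Iio N) (fun n hn => by
      by_contra h2; simp only [mem_Iio, not_lt] at h2; exact hc n h2 hn))
  · intro h hf
    rcases hf.bddAbove with ⟨b, hb⟩
    rcases h (b+1) with ⟨n, hn, hnS⟩
    exact absurd (hb hnS) (by omega)

lemma liminfEq_iff (x : ℕ → ℕ) (k : ℕ) :
    LiminfEq x k ↔ {n | x n ≤ k}.Infinite ∧ ∃ N, ∀ n, N ≤ n → k ≤ x n := by
  constructor
  · rintro ⟨hinf, hfin⟩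
    refine ⟨hinf, ?_⟩
    rcases Nat.eq_zero_or_pos k with rfl | hk
    · exact ⟨0, fun n _ => Nat.zero_le _⟩
    · rcases (hfin (k-1) (by omega)).bddAbove with ⟨b, hb⟩
      refine ⟨b+1, fun n hn => ?_⟩
      by_contra h
      have : n ∈ {n | x n ≤ k - 1} := by simp only [mem_setOf_eq]; omega
      exact absurd (hb this) (by omega)
  · rintro ⟨hinf, N, hN⟩
    refine ⟨hinf, fun j hj => Set.Finite.subset (finite_Iio N) (fun n hn => ?_)⟩
    simp only [mem_setOf_eq] at hn
    simp only [mem_Iio]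
    by_contra h
    have := hN n (by omega)
    omega

-- uniqueness of liminf
lemma liminfEq_unique {x : ℕ → ℕ} {k k' : ℕ} (h : LiminfEq x k) (h' : LiminfEq x k') : k = k' := by
  by_contra hne
  rcases Nat.lt_or_ge k k' with hlt | hge
  · exact h.1 (h'.2 k hlt)
  · exact h'.1 (h.2 k' (by omega))

lemma sigmaZero_cases {X : Type*} [TopologicalSpace X] {α : Ordinal} {A : Set X}
    (h : SigmaZero α A) :
    (α = 1 ∧ IsOpen A) ∨ (1 < α ∧ ∃ (B : ℕ → Set X) (β : ℕ → Ordinal),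
      (∀ k, 1 ≤ β k) ∧ (∀ k, β k < α) ∧ (∀ k, SigmaZero (β k) (B k)ᶜ) ∧ A = ⋃ k, B k) := by
  cases h with
  | isOpen h => exact Or.inl ⟨rfl, h⟩
  | iUnion hα B β h1 h2 h3 => exact Or.inr ⟨hα, B, β, h1, h2, h3, rfl⟩

lemma sigmaZero_one_isOpen {X : Type*} [TopologicalSpace X] {A : Set X}
    (h : SigmaZero 1 A) : IsOpen A := by
  rcases sigmaZero_cases h with ⟨_, h⟩ | ⟨h1, _⟩
  · exact h
  · exact absurd h1 (lt_irrefl _)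

lemma ord_eq_one_of {β : Ordinal} (h1 : 1 ≤ β) (h2 : β < 2) : β = 1 := by
  have : (2:Ordinal) = Order.succ 1 := by rw [← Ordinal.add_one_eq_succ]; norm_num
  rw [this, Order.lt_succ_iff] at h2
  exact le_antisymm h2 h1

lemma ord_cases_of {β : Ordinal} (h1 : 1 ≤ β) (h2 : β < 3) : β = 1 ∨ β = 2 := by
  have h3 : (3:Ordinal) = Order.succ 2 := by rw [← Ordinal.add_one_eq_succ]; norm_num
  have h2' : β ≤ 2 := by rwa [h3, Order.lt_succ_iff] at h2
  rcases lt_or_eq_of_le h2' with h | h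
  · exact Or.inl (ord_eq_one_of h1 h)
  · exact Or.inr h

/-- A Σ⁰₂ set is a countable union of closed sets (or just open). -/
lemma sigmaZero_two_cases {X : Type*} [TopologicalSpace X] {A : Set X} (h : SigmaZero 2 A) :
    IsOpen A ∨ ∃ F : ℕ → Set X, (∀ k, IsClosed (F k)) ∧ A = ⋃ k, F k := by
  rcases sigmaZero_cases h with ⟨h1, _⟩ | ⟨_, B, β, hβ1, hβ2, hB, rfl⟩
  · exact absurd h1 (by norm_num)
  · refine Or.inr ⟨B, fun k => ?_, rfl⟩
    have h1 := ord_eq_one_of (hβ1 k) (hβ2 k)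
    have hBk := hB k
    rw [h1] at hBk
    exact isOpen_compl_iff.mp (sigmaZero_one_isOpen hBk)

lemma closed_iInter_open {C : Set (ℕ → ℕ)} (hC : IsClosed C) :
    ∃ W : ℕ → Set (ℕ → ℕ), (∀ m, IsOpen (W m)) ∧ C = ⋂ m, W m := by
  refine ⟨fun n => ⋃ z ∈ C, cyl z n, fun n => isOpen_biUnion (fun z _ => isOpen_cyl z n), ?_⟩
  ext y
  simp only [mem_iInter, mem_iUnion]
  constructor
  · exact fun hy n => ⟨y, hy, mem_cyl_self y n⟩
  · intro hy
    by_contra hyC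
    rcases exists_cyl_subset hC.isOpen_compl (mem_compl hyC) with ⟨n, hn⟩
    rcases hy n with ⟨z, hzC, hz⟩
    have : z ∈ cyl y n := fun i hi => (hz i hi).symm
    exact hn this hzC



lemma nf3_of_sigmaZero {A : Set (ℕ → ℕ)} (h : SigmaZero 3 A) : NF3 A := by
  rcases sigmaZero_cases h with ⟨h1, _⟩ | ⟨_, B, β, hβ1, hβ2, hB, rfl⟩
  · exact absurd h1 (by norm_num)
  · have key : ∀ k, ∃ W : ℕ → Set (ℕ → ℕ), (∀ m, IsOpen (W m)) ∧ B k = ⋂ m, W m := by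
      intro k
      rcases ord_cases_of (hβ1 k) (hβ2 k) with h1 | h2
      · -- β k = 1 : (B k)ᶜ open, B k closed
        have hBk := hB k
        rw [h1] at hBk
        exact closed_iInter_open (isOpen_compl_iff.mp (sigmaZero_one_isOpen hBk))
      · have hBk := hB k
        rw [h2] at hBk
        rcases sigmaZero_two_cases hBk with hop | ⟨F, hF, hFeq⟩
        · -- (B k)ᶜ open: B k closed
          exact closed_iInter_open (isOpen_compl_iff.mp hop)
        · -- (B k)ᶜ = ⋃ F j closed, so B k = ⋂ (F j)ᶜ open
          refine ⟨fun j => (F j)ᶜ, fun j => (hF j).isOpen_compl, ?_⟩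
          have : B k = (⋃ j, F j)ᶜ := by rw [← hFeq, compl_compl]
          rw [this, compl_iUnion]
    choose W hWopen hWeq using key
    exact ⟨W, hWopen, by simp only [hWeq]⟩

lemma sigmaZero_of_nf3 {A : Set (ℕ → ℕ)} (h : NF3 A) : SigmaZero 3 A := by
  rcases h with ⟨V, hV, rfl⟩
  refine SigmaZero.iUnion (by norm_num) _ (fun _ => 2)
    (fun _ => show (1:Ordinal) ≤ 2 by norm_num)
    (fun _ => show (2:Ordinal) < 3 by
      exact_mod_cast Nat.cast_lt.mpr (by norm_num : (2:ℕ) < 3)) (fun n => ?_)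
  rw [compl_iInter]
  refine SigmaZero.iUnion (show (1:Ordinal) < 2 by norm_num) _ (fun _ => 1)
    (fun _ => le_refl _) (fun _ => show (1:Ordinal) < 2 by norm_num) (fun m => ?_)
  rw [compl_compl]
  exact SigmaZero.isOpen (hV n m)

lemma sigmaZero_preimage {X Y : Type*} [TopologicalSpace X] [TopologicalSpace Y]
    {g : X → Y} (hg : Continuous g) {α : Ordinal} {A : Set Y} (h : SigmaZero α A) :
    SigmaZero α (g ⁻¹' A) := by
  induction h with
  | isOpen h => exact SigmaZero.isOpen (h.preimage hg)
  | iUnion hα B β hβ1 hβ2 hB ih =>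
    rw [preimage_iUnion]
    exact SigmaZero.iUnion hα _ β hβ1 hβ2 (fun k => by
      rw [← preimage_compl]; exact ih k)

/-- the m-th open set in the Gδ presentation of `{x | LiminfEq x k}` with tail witness N -/
def EV (k N : ℕ) (m : ℕ) : Set (ℕ → ℕ) :=
  if m % 2 = 0 then ⋃ n ∈ {n | m / 2 ≤ n}, {x : ℕ → ℕ | x n ≤ k}
  else {x : ℕ → ℕ | N ≤ m / 2 → k ≤ x (m / 2)}

lemma isOpen_le_coord (n k : ℕ) : IsOpen {x : ℕ → ℕ | x n ≤ k} := by
  have h : {x : ℕ → ℕ | x n ≤ k} = (fun x : ℕ → ℕ => x n) ⁻¹' (Iic k) := by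
    ext x; simp
  rw [h]
  exact (continuous_apply n).isOpen_preimage _ (isOpen_discrete _)

lemma isOpen_ge_coord (n k : ℕ) : IsOpen {x : ℕ → ℕ | k ≤ x n} := by
  have h : {x : ℕ → ℕ | k ≤ x n} = (fun x : ℕ → ℕ => x n) ⁻¹' (Ici k) := by
    ext x; simp
  rw [h]
  exact (continuous_apply n).isOpen_preimage _ (isOpen_discrete _)

lemma isOpen_EV (k N m : ℕ) : IsOpen (EV k N m) := by
  unfold EV
  split_ifs
  · exact isOpen_biUnion fun n _ => isOpen_le_coord n k
  · by_cases h : N ≤ m / 2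
    · have : {x : ℕ → ℕ | N ≤ m / 2 → k ≤ x (m / 2)} = {x : ℕ → ℕ | k ≤ x (m/2)} := by
        ext x; simp [h]
      rw [this]
      exact isOpen_ge_coord (m/2) k
    · have : {x : ℕ → ℕ | N ≤ m / 2 → k ≤ x (m / 2)} = univ := by
        ext x; simp [h]
      rw [this]; exact isOpen_univ

lemma iInter_EV (k N : ℕ) :
    (⋂ m, EV k N m) = {x | (∀ M, ∃ n, M ≤ n ∧ x n ≤ k) ∧ ∀ n, N ≤ n → k ≤ x n} := by
  ext x
  simp only [mem_iInter, mem_setOf_eq]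
  constructor
  · intro h
    constructor
    · intro M
      have := h (2 * M)
      rw [show EV k N (2*M) = ⋃ n ∈ {n | (2*M) / 2 ≤ n}, {x : ℕ → ℕ | x n ≤ k} from
        if_pos (by omega)] at this
      simp only [mem_iUnion, mem_setOf_eq, exists_prop] at this
      rcases this with ⟨n, hn1, hn2⟩
      exact ⟨n, by omega, hn2⟩
    · intro n hn
      have := h (2 * n + 1)
      have hmod : (2 * n + 1) % 2 ≠ 0 := by omega
      simp only [EV, if_neg hmod] at this
      have hdiv : (2 * n + 1) / 2 = n := by omega
      rw [hdiv] at this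
      exact this hn
  · rintro ⟨h1, h2⟩ m
    unfold EV
    split_ifs with hm
    · simp only [mem_iUnion, mem_setOf_eq]
      rcases h1 (m / 2) with ⟨n, hn1, hn2⟩
      exact ⟨n, hn1, hn2⟩
    · exact fun hN => h2 _ hN

lemma liminf_set_eq (k : ℕ) : (⋃ N, ⋂ m, EV k N m) = {x | LiminfEq x k} := by
  ext x
  simp only [mem_iUnion, iInter_EV, mem_setOf_eq, liminfEq_iff, infinite_iff_unbdd]
  constructor
  · rintro ⟨N, h1, h2⟩
    exact ⟨fun M => (h1 M).imp (fun n hn => ⟨hn.1, hn.2⟩), N, h2⟩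
  · rintro ⟨h1, N, h2⟩
    exact ⟨N, fun M => (h1 M).imp (fun n hn => ⟨hn.1, hn.2⟩), h2⟩

lemma nf3_Eset : NF3 Eset := by
  refine ⟨fun c => EV (2 * c.unpair.1) c.unpair.2, fun c m => isOpen_EV _ _ _, ?_⟩
  ext x
  simp only [Eset, mem_setOf_eq, mem_iUnion]
  constructor
  · rintro ⟨k, ⟨r, hr⟩, hk⟩
    have hxk : x ∈ {x | LiminfEq x k} := hk
    rw [← liminf_set_eq] at hxk
    rcases mem_iUnion.mp hxk with ⟨N, hN⟩
    refine ⟨Nat.pair r N, ?_⟩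
    have h1 : (Nat.pair r N).unpair.1 = r := by simp
    have h2 : (Nat.pair r N).unpair.2 = N := by simp
    rw [h1, h2]
    have : 2 * r = k := by omega
    rw [this]
    exact hN
  · rintro ⟨c, hc⟩
    refine ⟨2 * c.unpair.1, ⟨c.unpair.1, by ring⟩, ?_⟩
    have : x ∈ ⋃ N, ⋂ m, EV (2 * c.unpair.1) N m := mem_iUnion.mpr ⟨c.unpair.2, hc⟩
    rw [liminf_set_eq] at this
    exact this

lemma nf3_Oset : NF3 Oset := by
  refine ⟨fun c => EV (2 * c.unpair.1 + 1) c.unpair.2, fun c m => isOpen_EV _ _ _, ?_⟩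
  ext x
  simp only [Oset, mem_setOf_eq, mem_iUnion]
  constructor
  · rintro ⟨k, ⟨r, hr⟩, hk⟩
    have hxk : x ∈ {x | LiminfEq x k} := hk
    rw [← liminf_set_eq] at hxk
    rcases mem_iUnion.mp hxk with ⟨N, hN⟩
    refine ⟨Nat.pair r N, ?_⟩
    have h1 : (Nat.pair r N).unpair.1 = r := by simp
    have h2 : (Nat.pair r N).unpair.2 = N := by simp
    rw [h1, h2]
    have : 2 * r + 1 = k := by omega
    rw [this]
    exact hN
  · rintro ⟨c, hc⟩
    refine ⟨2 * c.unpair.1 + 1, ⟨c.unpair.1, by ring⟩, ?_⟩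
    have : x ∈ ⋃ N, ⋂ m, EV (2 * c.unpair.1 + 1) N m := mem_iUnion.mpr ⟨c.unpair.2, hc⟩
    rw [liminf_set_eq] at this
    exact this

section TT
variable (W : ℕ → ℕ → Set (ℕ → ℕ))

/-- number of "confirmed" open sets `W i m` at stage `n` (capped at `n+1`). -/
noncomputable def tt (i : ℕ) (x : ℕ → ℕ) (n : ℕ) : ℕ :=
  sInf ({m | ¬ cyl x n ⊆ W i m} ∪ {n + 1})

lemma tt_nonempty (i : ℕ) (x : ℕ → ℕ) (n : ℕ) :
    ({m | ¬ cyl x n ⊆ W i m} ∪ {n + 1}).Nonempty := ⟨n + 1, Or.inr rfl⟩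

lemma tt_le (i : ℕ) (x : ℕ → ℕ) (n : ℕ) : tt W i x n ≤ n + 1 :=
  Nat.sInf_le (Or.inr rfl)

lemma tt_spec {i : ℕ} {x : ℕ → ℕ} {n m : ℕ} (h : m < tt W i x n) : cyl x n ⊆ W i m := by
  by_contra hc
  have hle : tt W i x n ≤ m := Nat.sInf_le (Or.inl hc)
  omega

lemma tt_mono (i : ℕ) (x : ℕ → ℕ) {n n' : ℕ} (h : n ≤ n') : tt W i x n ≤ tt W i x n' := by
  have hmem : tt W i x n' ∈ {m | ¬ cyl x n' ⊆ W i m} ∪ {n' + 1} :=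
    Nat.sInf_mem (tt_nonempty W i x n')
  rcases hmem with hfail | heq
  · -- tt W i x n' is a failure at stage n', hence also at stage n
    have : ¬ cyl x n ⊆ W i (tt W i x n') := fun hsub => hfail ((cyl_anti x h).trans hsub)
    exact Nat.sInf_le (Or.inl this)
  · have h1 := tt_le W i x n
    simp only [mem_singleton_iff] at heq
    omega

lemma tt_bdd_of_not_mem {i : ℕ} {x : ℕ → ℕ} {m₀ : ℕ} (h : x ∉ W i m₀) (n : ℕ) :
    tt W i x n ≤ m₀ :=
  Nat.sInf_le (Or.inl fun hsub => h (hsub (mem_cyl_self x n)))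

lemma tt_unbdd {i : ℕ} {x : ℕ → ℕ} (hW : ∀ m, IsOpen (W i m)) (hx : ∀ m, x ∈ W i m)
    (B : ℕ) : ∃ n, B < tt W i x n := by
  have h : ∀ m, ∃ nm, cyl x nm ⊆ W i m := fun m => exists_cyl_subset (hW m) (hx m)
  choose g hg using h
  refine ⟨max B ((Finset.range (B + 1)).sup g), ?_⟩
  set n := max B ((Finset.range (B + 1)).sup g) with hn
  have : ∀ m ∈ {m | ¬ cyl x n ⊆ W i m} ∪ {n + 1}, B < m := by
    rintro m (hm | hm)
    · by_contra hc
      push_neg at hc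
      have hgm : g m ≤ n := le_trans (Finset.le_sup (Finset.mem_range.mpr (by omega))) (le_max_right _ _)
      exact hm ((cyl_anti x hgm).trans (hg m))
    · simp only [mem_singleton_iff] at hm; omega
  exact this _ (Nat.sInf_mem (tt_nonempty W i x n))

lemma tt_congr (i : ℕ) {x x' : ℕ → ℕ} {n : ℕ} (h : ∀ j < n, x j = x' j) :
    tt W i x n = tt W i x' n := by
  unfold tt
  rw [cyl_eq_of_agree h]

/-- The reduction function. -/
noncomputable def ff (x : ℕ → ℕ) (n : ℕ) : ℕ :=
  sInf ({i | i ≤ n ∧ tt W i x n < tt W i x (n + 1)} ∪ {n})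

lemma ff_nonempty (x : ℕ → ℕ) (n : ℕ) :
    ({i | i ≤ n ∧ tt W i x n < tt W i x (n + 1)} ∪ {n}).Nonempty := ⟨n, Or.inr rfl⟩

lemma ff_congr {x x' : ℕ → ℕ} {n : ℕ} (h : ∀ j < n + 1, x j = x' j) : ff W x n = ff W x' n := by
  unfold ff
  have h1 : ∀ i, tt W i x n = tt W i x' n := fun i => tt_congr W i (fun j hj => h j (by omega))
  have h2 : ∀ i, tt W i x (n+1) = tt W i x' (n+1) := fun i => tt_congr W i h
  simp only [h1, h2]

lemma continuous_ff : Continuous (fun x => ff W x) := by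
  apply continuous_pi
  intro n
  rw [continuous_iff_continuousAt]
  intro x
  have hnb : cyl x (n+1) ∈ nhds x := (isOpen_cyl x (n+1)).mem_nhds (mem_cyl_self x (n+1))
  have : ∀ y ∈ cyl x (n+1), ff W y n = ff W x n := fun y hy => ff_congr W hy
  unfold ContinuousAt
  have hds : ∀ s ∈ nhds (ff W x n), (fun y => ff W y n) ⁻¹' s ∈ nhds x := by
    intro s hs
    have hmem : ff W x n ∈ s := mem_of_mem_nhds hs
    exact Filter.mem_of_superset hnb (fun y hy => by
      simp only [mem_preimage]; rw [this y hy]; exact hmem)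
  exact fun s hs => hds s hs

/-- helper: set of strict-increase stages of a bounded monotone ℕ-sequence is finite. -/
lemma incs_finite {g : ℕ → ℕ} (hm : ∀ n n', n ≤ n' → g n ≤ g n') {B : ℕ} (hB : ∀ n, g n ≤ B) :
    {n | g n < g (n + 1)}.Finite := by
  have hinj : InjOn (fun n => g (n + 1)) {n | g n < g (n + 1)} := by
    intro a ha b hb hab
    simp only [mem_setOf_eq] at ha hb
    by_contra hne
    rcases Nat.lt_or_ge a b with h | h
    · have := hm (a+1) b (by omega); simp only at hab; omega
    · have hba : b < a := by omega
      have := hm (b+1) a (by omega); simp only at hab; omega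
  have himage : (fun n => g (n + 1)) '' {n | g n < g (n + 1)} ⊆ Iic B := by
    rintro m ⟨n, _, rfl⟩; exact hB (n+1)
  exact Set.Finite.of_finite_image (Set.Finite.subset (finite_Iic B) himage) hinj

/-- If x is in the Gδ set `⋂ m, W j m`, then `ff W x n ≤ j` infinitely often. -/
lemma ff_le_infinite {j : ℕ} {x : ℕ → ℕ} (hW : ∀ m, IsOpen (W j m)) (hx : ∀ m, x ∈ W j m) :
    {n | ff W x n ≤ j}.Infinite := by
  rw [infinite_iff_unbdd]
  intro N
  -- find a strict increase stage n ≥ max N j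
  set M := max N j with hM
  by_cases hstag : ∃ n, M ≤ n ∧ tt W j x n < tt W j x (n + 1)
  · rcases hstag with ⟨n, hn1, hn2⟩
    refine ⟨n, by omega, ?_⟩
    have : j ∈ {i | i ≤ n ∧ tt W i x n < tt W i x (n + 1)} ∪ {n} :=
      Or.inl ⟨by omega, hn2⟩
    exact Nat.sInf_le this
  · exfalso
    push_neg at hstag
    -- tt W j x is eventually constant at value tt W j x M, so bounded
    have hconst : ∀ n, M ≤ n → tt W j x n ≤ tt W j x M := by
      intro n hn
      induction n with
      | zero => exact tt_mono W j x (by omega)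
      | succ n ih =>
        rcases Nat.lt_or_ge n M with h | h
        · exact tt_mono W j x (by omega)
        · have := hstag n h
          have hih := ih h
          omega
    have hbdd : ∀ n, tt W j x n ≤ tt W j x M := by
      intro n
      rcases Nat.lt_or_ge n M with h | h
      · exact tt_mono W j x (by omega)
      · exact hconst n h
    rcases tt_unbdd W hW hx (tt W j x M) with ⟨n, hn⟩
    exact absurd (hbdd n) (by omega)

/-- If x avoids all the Gδ sets `⋂ m, W j' m` for `j' ≤ j`, then `ff W x n ≤ j` finitely often. -/
lemma ff_le_finite {j : ℕ} {x : ℕ → ℕ} (hx : ∀ j' ≤ j, ∃ m, x ∉ W j' m) :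
    {n | ff W x n ≤ j}.Finite := by
  choose m₀ hm₀ using hx
  have hsub : {n | ff W x n ≤ j} ⊆
      Iic j ∪ ⋃ j' ∈ Iic j, {n | tt W j' x n < tt W j' x (n + 1)} := by
    intro n hn
    simp only [mem_setOf_eq] at hn
    rcases Nat.lt_or_ge j n with h | h
    · right
      have hval : ff W x n ∈ {i | i ≤ n ∧ tt W i x n < tt W i x (n + 1)} ∪ {n} :=
        Nat.sInf_mem (ff_nonempty W x n)
      rcases hval with hval | hval
      · simp only [mem_setOf_eq] at hval
        simp only [mem_iUnion, mem_Iic, mem_setOf_eq]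
        exact ⟨ff W x n, hn, hval.2⟩
      · simp only [mem_singleton_iff] at hval
        change ff W x n = n at hval
        omega
    · exact Or.inl (by simp only [mem_Iic]; omega)
  refine Set.Finite.subset (Set.Finite.union (finite_Iic j) ?_) hsub
  refine Set.Finite.biUnion (finite_Iic j) (fun j' hj' => ?_)
  simp only [mem_Iic] at hj'
  exact incs_finite (fun n n' h => tt_mono W j' x h)
    (fun n => tt_bdd_of_not_mem W (hm₀ j' hj') n)

/-- Main reduction property of ff. -/
lemma ff_liminf {j : ℕ} {x : ℕ → ℕ} (hW : ∀ i m, IsOpen (W i m))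
    (hx : ∀ m, x ∈ W j m) (hmin : ∀ j' < j, ∃ m, x ∉ W j' m) :
    LiminfEq (ff W x) j := by
  constructor
  · exact ff_le_infinite W (hW j) hx
  · intro j' hj'
    exact ff_le_finite W (fun j'' hj'' => hmin j'' (by omega))
end TT

/-- the basic set coded by an optional list -/
def ocyl : Option (List ℕ) → Set (ℕ → ℕ)
  | none => ∅
  | some s => cyl (fun i => s.getD i 0) s.length

lemma isOpen_ocyl (o : Option (List ℕ)) : IsOpen (ocyl o) := by
  cases o with
  | none => exact isOpen_empty
  | some s => exact isOpen_cyl _ _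

/-- the open set coded by a natural number -/
def decodeSet (v : ℕ) : Set (ℕ → ℕ) := ocyl (Denumerable.ofNat (Option (List ℕ)) v)

lemma isOpen_decodeSet (v : ℕ) : IsOpen (decodeSet v) := isOpen_ocyl _

/-- code of an open set as a sequence of basic-set codes -/
noncomputable def openCode (G : Set (ℕ → ℕ)) (j : ℕ) : ℕ :=
  letI := Classical.dec (ocyl (some (Denumerable.ofNat (List ℕ) j)) ⊆ G)
  Encodable.encode
    (if ocyl (some (Denumerable.ofNat (List ℕ) j)) ⊆ G then some (Denumerable.ofNat (List ℕ) j)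
     else (none : Option (List ℕ)))

lemma decode_openCode {G : Set (ℕ → ℕ)} (hG : IsOpen G) :
    (⋃ j, decodeSet (openCode G j)) = G := by
  apply Subset.antisymm
  · refine iUnion_subset fun j => ?_
    unfold decodeSet openCode
    split_ifs with h
    · rw [Denumerable.ofNat_encode]; exact h
    · rw [Denumerable.ofNat_encode]; exact empty_subset G
  · intro x hx
    rcases exists_cyl_subset hG hx with ⟨n, hn⟩
    set s : List ℕ := (List.range n).map x with hs
    have hlen : s.length = n := by simp [hs]
    have hgetD : ∀ i < n, s.getD i 0 = x i := by
      intro i hi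
      rw [hs, List.getD_eq_getElem _ _ (by simp [hi])]
      simp [hi]
    have hcyl : ocyl (some s) = cyl x n := by
      show cyl (fun i => s.getD i 0) s.length = cyl x n
      rw [hlen]
      ext y
      constructor <;> intro hy i hi <;> have h2 := hy i hi
      · rw [h2]; exact hgetD i hi
      · rw [h2]; exact (hgetD i hi).symm
    have hsub : ocyl (some s) ⊆ G := by rw [hcyl]; exact hn
    refine mem_iUnion.mpr ⟨Encodable.encode s, ?_⟩
    unfold decodeSet openCode
    simp only [Denumerable.ofNat_encode]
    have hc : ocyl (some (Denumerable.ofNat (List ℕ) (Encodable.encode s))) ⊆ G := by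
      rw [Denumerable.ofNat_encode]; exact hsub
    rw [if_pos hc, hcyl]
    exact fun i _ => rfl

/-- interleaving -/
def merge (y x : ℕ → ℕ) : ℕ → ℕ := fun n => if n % 2 = 0 then y (n / 2) else x (n / 2)
def evp (w : ℕ → ℕ) : ℕ → ℕ := fun i => w (2 * i)
def odp (w : ℕ → ℕ) : ℕ → ℕ := fun i => w (2 * i + 1)

lemma evp_merge (y x : ℕ → ℕ) : evp (merge y x) = y := by
  funext i; simp only [evp, merge]
  rw [if_pos (by omega), Nat.mul_div_cancel_left i (by norm_num)]

lemma odp_merge (y x : ℕ → ℕ) : odp (merge y x) = x := by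
  funext i; simp only [odp, merge]
  rw [if_neg (by omega)]
  congr 1; omega

lemma continuous_odp : Continuous odp := by
  apply continuous_pi; intro i; exact continuous_apply (2 * i + 1)

def c3 (n m j : ℕ) : ℕ := Nat.pair n (Nat.pair m j)

/-- the universal Σ⁰₃ family of open sets -/
def UW (n m : ℕ) : Set (ℕ → ℕ) :=
  ⋃ j, ⋃ v, ({w : ℕ → ℕ | w (2 * c3 n m j) = v} ∩ odp ⁻¹' decodeSet v)

lemma isOpen_UW (n m : ℕ) : IsOpen (UW n m) := by
  refine isOpen_iUnion fun j => isOpen_iUnion fun v => IsOpen.inter ?_ ?_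
  · have : {w : ℕ → ℕ | w (2 * c3 n m j) = v} =
        (fun w : ℕ → ℕ => w (2 * c3 n m j)) ⁻¹' {v} := rfl
    rw [this]
    exact (continuous_apply _).isOpen_preimage _ (isOpen_discrete _)
  · exact continuous_odp.isOpen_preimage _ (isOpen_decodeSet v)

lemma mem_UW_iff (n m : ℕ) (w : ℕ → ℕ) :
    w ∈ UW n m ↔ ∃ j, odp w ∈ decodeSet (w (2 * c3 n m j)) := by
  simp only [UW, mem_iUnion, mem_inter_iff, mem_setOf_eq, mem_preimage]
  constructor
  · rintro ⟨j, v, hv, hw⟩; exact ⟨j, by rwa [hv]⟩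
  · rintro ⟨j, hj⟩; exact ⟨j, w (2 * c3 n m j), rfl, hj⟩

def USet : Set (ℕ → ℕ) := ⋃ n, ⋂ m, UW n m

/-- universality: every NF3 set is a section of USet. -/
lemma universal {S : Set (ℕ → ℕ)} (V : ℕ → ℕ → Set (ℕ → ℕ))
    (hV : ∀ n m, IsOpen (V n m)) (hS : S = ⋃ n, ⋂ m, V n m) :
    ∃ a : ℕ → ℕ, ∀ x, (x ∈ S ↔ merge a x ∈ USet) := by
  refine ⟨fun t => openCode (V t.unpair.1 t.unpair.2.unpair.1) t.unpair.2.unpair.2, fun x => ?_⟩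
  set a : ℕ → ℕ := fun t => openCode (V t.unpair.1 t.unpair.2.unpair.1) t.unpair.2.unpair.2
    with ha
  have key : ∀ n m, (merge a x ∈ UW n m ↔ x ∈ V n m) := by
    intro n m
    rw [mem_UW_iff]
    have hcoord : ∀ j, merge a x (2 * c3 n m j) = openCode (V n m) j := by
      intro j
      have h1 : merge a x (2 * c3 n m j) = a (c3 n m j) := by
        simp only [merge]
        rw [if_pos (by omega)]
        congr 1; omega
      rw [h1, ha]
      simp only [c3, Nat.unpair_pair]
    have hodp : odp (merge a x) = x := odp_merge a x
    constructor
    · rintro ⟨j, hj⟩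
      rw [hcoord j, hodp] at hj
      rw [← decode_openCode (hV n m)]
      exact mem_iUnion.mpr ⟨j, hj⟩
    · intro hx
      rw [← decode_openCode (hV n m)] at hx
      rcases mem_iUnion.mp hx with ⟨j, hj⟩
      exact ⟨j, by rwa [hcoord j, hodp]⟩
  rw [hS]
  simp only [USet, mem_iUnion, mem_iInter]
  exact exists_congr fun n => forall_congr' fun m => (key n m).symm


section Endgame

/-- diagonal section maps -/
def g0 (x : ℕ → ℕ) : ℕ → ℕ := merge (evp x) x
def g1 (x : ℕ → ℕ) : ℕ → ℕ := merge (odp x) x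

lemma continuous_g0 : Continuous g0 := by
  apply continuous_pi
  intro n
  by_cases h : n % 2 = 0
  · have : (fun x => g0 x n) = fun x : ℕ → ℕ => x (2 * (n / 2)) := by
      funext x; simp [g0, merge, evp, h]
    rw [this]; exact continuous_apply _
  · have : (fun x => g0 x n) = fun x : ℕ → ℕ => x (n / 2) := by
      funext x; simp [g0, merge, evp, h]
    rw [this]; exact continuous_apply _

lemma continuous_g1 : Continuous g1 := by
  apply continuous_pi
  intro n
  by_cases h : n % 2 = 0
  · have : (fun x => g1 x n) = fun x : ℕ → ℕ => x (2 * (n / 2) + 1) := by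
      funext x; simp [g1, merge, odp, h]
    rw [this]; exact continuous_apply _
  · have : (fun x => g1 x n) = fun x : ℕ → ℕ => x (n / 2) := by
      funext x; simp [g1, merge, odp, h]
    rw [this]; exact continuous_apply _

/-- the interleaved family of open sets -/
def RW (i m : ℕ) : Set (ℕ → ℕ) :=
  if i % 2 = 0 then g0 ⁻¹' (UW (i / 2) m) else g1 ⁻¹' (UW (i / 2) m)

lemma isOpen_RW (i m : ℕ) : IsOpen (RW i m) := by
  unfold RW
  split_ifs
  · exact continuous_g0.isOpen_preimage _ (isOpen_UW _ m)
  · exact continuous_g1.isOpen_preimage _ (isOpen_UW _ m)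

lemma RW_even (n m : ℕ) : RW (2 * n) m = g0 ⁻¹' (UW n m) := by
  unfold RW
  rw [if_pos (by omega), show (2 * n) / 2 = n from by omega]

lemma RW_odd (n m : ℕ) : RW (2 * n + 1) m = g1 ⁻¹' (UW n m) := by
  unfold RW
  rw [if_neg (by omega), show (2 * n + 1) / 2 = n from by omega]

theorem no_delta3_separator :
    ¬ ∃ C : Set (ℕ → ℕ), DeltaZero 3 C ∧ Eset ⊆ C ∧ C ∩ Oset = ∅ := by
  rintro ⟨C, ⟨hCs, hCp⟩, hEC, hCO⟩
  -- the reduction function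
  set f : (ℕ → ℕ) → ℕ → ℕ := ff RW with hf
  set C' : Set (ℕ → ℕ) := f ⁻¹' C with hC'
  have hC's : SigmaZero 3 C' := sigmaZero_preimage (continuous_ff RW) hCs
  have hC'c : SigmaZero 3 C'ᶜ := by
    have := sigmaZero_preimage (continuous_ff RW) hCp
    rwa [preimage_compl] at this
  -- universality applied to C'ᶜ and C'
  obtain ⟨Va, hVa, hVaeq⟩ := nf3_of_sigmaZero hC'c
  obtain ⟨Vb, hVb, hVbeq⟩ := nf3_of_sigmaZero hC's
  obtain ⟨a, ha⟩ := universal Va hVa hVaeq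
  obtain ⟨b, hb⟩ := universal Vb hVb hVbeq
  set x₀ : ℕ → ℕ := merge a b with hx₀
  have hax₀ : merge (evp x₀) x₀ = merge a x₀ := by rw [hx₀, evp_merge]
  have hbx₀ : merge (odp x₀) x₀ = merge b x₀ := by rw [hx₀, odp_merge]
  -- x₀ ∈ A ↔ x₀ ∉ C',  x₀ ∈ B ↔ x₀ ∈ C'
  have hA : (g0 x₀ ∈ USet) ↔ x₀ ∉ C' := by
    rw [show g0 x₀ = merge a x₀ from hax₀]
    exact (ha x₀).symm
  have hB : (g1 x₀ ∈ USet) ↔ x₀ ∈ C' := by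
    rw [show g1 x₀ = merge b x₀ from hbx₀]
    exact (hb x₀).symm
  -- common part: from a least i with x₀ ∈ ⋂ m, RW i m, derive the liminf of f x₀
  have main : ∀ j, (∀ m, x₀ ∈ RW j m) → (∀ j' < j, ∃ m, x₀ ∉ RW j' m) →
      LiminfEq (f x₀) j := fun j h1 h2 => ff_liminf RW isOpen_RW h1 h2
  -- x₀ is in some R i iff …
  by_cases hc : x₀ ∈ C'
  · -- x₀ ∈ B, x₀ ∉ A ⇒ least index odd ⇒ f x₀ ∈ Oset ⇒ f x₀ ∉ C ⇒ x₀ ∉ C'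
    have hBx : g1 x₀ ∈ USet := hB.mpr hc
    have hAx : g0 x₀ ∉ USet := fun h => (hA.mp h) hc
    rcases mem_iUnion.mp hBx with ⟨n, hn⟩
    have hne : ∃ i, ∀ m, x₀ ∈ RW i m := by
      refine ⟨2 * n + 1, fun m => ?_⟩
      rw [RW_odd]
      exact mem_preimage.mpr (mem_iInter.mp hn m)
    obtain ⟨j, hjmem, hjmin⟩ :
        ∃ j, (∀ m, x₀ ∈ RW j m) ∧ ∀ j' < j, ∃ m, x₀ ∉ RW j' m := by
      refine ⟨sInf {i | ∀ m, x₀ ∈ RW i m}, Nat.sInf_mem hne, ?_⟩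
      intro j' hj'
      by_contra hcon
      push_neg at hcon
      exact absurd (Nat.sInf_le (show j' ∈ {i | ∀ m, x₀ ∈ RW i m} from hcon)) (by omega)
    have hjodd : j % 2 = 1 := by
      by_contra hpar
      have heven : j % 2 = 0 := by omega
      apply hAx
      refine mem_iUnion.mpr ⟨j / 2, mem_iInter.mpr fun m => ?_⟩
      have := hjmem m
      rw [show j = 2 * (j / 2) from by omega, RW_even] at this
      exact this
    have hlim : LiminfEq (f x₀) j := main j hjmem hjmin
    have hO : f x₀ ∈ Oset := ⟨j, ⟨j / 2, by omega⟩, hlim⟩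
    have hfC : f x₀ ∈ C := hc
    have : f x₀ ∈ C ∩ Oset := ⟨hfC, hO⟩
    rw [hCO] at this
    exact this
  · -- x₀ ∉ C' : x₀ ∈ A, x₀ ∉ B ⇒ least index even ⇒ f x₀ ∈ Eset ⊆ C ⇒ x₀ ∈ C'
    have hAx : g0 x₀ ∈ USet := hA.mpr hc
    have hBx : g1 x₀ ∉ USet := fun h => hc (hB.mp h)
    rcases mem_iUnion.mp hAx with ⟨n, hn⟩
    have hne : ∃ i, ∀ m, x₀ ∈ RW i m := by
      refine ⟨2 * n, fun m => ?_⟩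
      rw [RW_even]
      exact mem_preimage.mpr (mem_iInter.mp hn m)
    obtain ⟨j, hjmem, hjmin⟩ :
        ∃ j, (∀ m, x₀ ∈ RW j m) ∧ ∀ j' < j, ∃ m, x₀ ∉ RW j' m := by
      refine ⟨sInf {i | ∀ m, x₀ ∈ RW i m}, Nat.sInf_mem hne, ?_⟩
      intro j' hj'
      by_contra hcon
      push_neg at hcon
      exact absurd (Nat.sInf_le (show j' ∈ {i | ∀ m, x₀ ∈ RW i m} from hcon)) (by omega)
    have hjeven : j % 2 = 0 := by
      by_contra hpar
      have hodd : j % 2 = 1 := by omega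
      apply hBx
      refine mem_iUnion.mpr ⟨j / 2, mem_iInter.mpr fun m => ?_⟩
      have := hjmem m
      rw [show j = 2 * (j / 2) + 1 from by omega, RW_odd] at this
      exact this
    have hlim : LiminfEq (f x₀) j := main j hjmem hjmin
    have hE : f x₀ ∈ Eset := ⟨j, ⟨j / 2, by omega⟩, hlim⟩
    exact hc (hEC hE)

end Endgame

theorem stmt7 :
    Eset ∩ Oset = ∅ ∧
    SigmaZero 3 Eset ∧ SigmaZero 3 Oset ∧
    ¬ ∃ C : Set (ℕ → ℕ), DeltaZero 3 C ∧ Eset ⊆ C ∧ C ∩ Oset = ∅ := by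
  refine ⟨?_, sigmaZero_of_nf3 nf3_Eset, sigmaZero_of_nf3 nf3_Oset, no_delta3_separator⟩
  ext x
  simp only [mem_inter_iff, mem_empty_iff_false, iff_false]
  rintro ⟨⟨k, hke, hk⟩, ⟨k', hko, hk'⟩⟩
  have := liminfEq_unique hk hk'
  subst this
  exact (Nat.not_odd_iff_even.mpr hke) hko
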